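/- Let p be a prime, n ≥ 1, d₀ = p^n − 1, D = {1 ≤ i ≤ p^n − 1 : gcd(i,p) = 1}. Suppose U = (u_d)_{d∈D} ∈ E_{D,p}(m) satisfies Σ_d s_p(u_d)/(m(p−1)) = 1/(n(p−1)) (i.e. U is minimal). Then n divides m, say m = nt, and u_d = 0 for all d ≠ d₀, and u_{d₀} = p^i·(p^{nt} − 1)/(p^n − 1) for some 0 ≤ i ≤ n − 1. -/
import Mathlib


/-- `sp p n` is the sum of the base-`p` digits of `n`. -/
def sp (p n : ℕ) : ℕ := (Nat.digits p n).sum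


lemma sp_zero (p : ℕ) : sp p 0 = 0 := by simp [sp]

lemma sp_rec {p : ℕ} (hp : 1 < p) (N : ℕ) : sp p N = N % p + sp p (N / p) := by
  rcases Nat.eq_zero_or_pos N with h | h
  · simp [h, sp]
  · rw [sp, Nat.digits_def' hp h, List.sum_cons]; rfl

lemma sp_mul_pow_add {p : ℕ} (hp : 1 < p) (m : ℕ) :
    ∀ q r, r < p ^ m → sp p (q * p ^ m + r) = sp p q + sp p r := by
  induction m with
  | zero =>
    intro q r hr
    simp only [pow_zero] at hr ⊢
    have : r = 0 := by omega
    simp [this, sp_zero]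
  | succ m ih =>
    intro q r hr
    have hp0 : 0 < p := by omega
    rw [sp_rec hp (q * p ^ (m+1) + r), sp_rec hp r]
    have h1 : (q * p ^ (m+1) + r) % p = r % p := by
      have : q * p ^ (m+1) = (q * p ^ m) * p := by ring
      rw [this, Nat.add_comm, Nat.add_mul_mod_self_right]
    have h2 : (q * p ^ (m+1) + r) / p = q * p ^ m + r / p := by
      have : q * p ^ (m+1) = (q * p ^ m) * p := by ring
      rw [this, Nat.add_comm, Nat.add_mul_div_right _ _ hp0, Nat.add_comm]
    have h3 : r / p < p ^ m := by
      rw [Nat.div_lt_iff_lt_mul hp0, ← pow_succ]; exact hr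
    rw [h1, h2, ih q (r / p) h3]; ring

lemma sp_lt_base {p : ℕ} (hp : 1 < p) {a : ℕ} (ha : a < p) : sp p a = a := by
  rw [sp_rec hp a, Nat.mod_eq_of_lt ha, Nat.div_eq_of_lt ha, sp_zero, Nat.add_zero]

lemma sp_add_le {p : ℕ} (hp : 1 < p) : ∀ a b : ℕ, sp p (a + b) ≤ sp p a + sp p b := by
  have key : ∀ N, ∀ a b : ℕ, a + b ≤ N → sp p (a + b) ≤ sp p a + sp p b := by
    intro N
    induction N with
    | zero => intro a b h
              have h1 : a = 0 ∧ b = 0 := by omega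
              simp [h1.1, h1.2]
    | succ N ih =>
      intro a b h
      have hp0 : 0 < p := by omega
      have hma : a % p < p := Nat.mod_lt _ hp0
      have hmb : b % p < p := Nat.mod_lt _ hp0
      have hdiv := Nat.add_div (a := a) (b := b) hp0
      have hmod : (a + b) % p = (a % p + b % p) % p := Nat.add_mod a b p
      rcases Nat.eq_zero_or_pos (a + b) with hz | hpos
      · have h1 : a = 0 ∧ b = 0 := by omega
        simp [h1.1, h1.2]
      have hlt : (a + b) / p < a + b := Nat.div_lt_self hpos hp
      rw [sp_rec hp (a+b), sp_rec hp a, sp_rec hp b]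
      by_cases hc : p ≤ a % p + b % p
      · -- carry
        rw [if_pos hc] at hdiv
        have hmod2 : (a + b) % p = a % p + b % p - p := by
          rw [hmod, Nat.mod_eq_sub_mod hc, Nat.mod_eq_of_lt (by omega)]
        have h1 : sp p (a/p + b/p + 1) ≤ sp p (a/p + b/p) + sp p 1 := ih _ _ (by omega)
        have h2 : sp p (a/p + b/p) ≤ sp p (a/p) + sp p (b/p) := ih _ _ (by omega)
        have h3 : sp p 1 = 1 := sp_lt_base hp hp
        rw [hdiv, hmod2]
        omega
      · rw [if_neg hc, Nat.add_zero] at hdiv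
        have hmod2 : (a + b) % p = a % p + b % p := by
          rw [hmod, Nat.mod_eq_of_lt (by omega)]
        have h2 : sp p (a/p + b/p) ≤ sp p (a/p) + sp p (b/p) := ih _ _ (by omega)
        rw [hdiv, hmod2]
        omega
  intro a b; exact key (a+b) a b le_rfl

lemma sp_mul_base {p : ℕ} (hp : 1 < p) (x : ℕ) : sp p (x * p) = sp p x := by
  have h : x * p / p = x := by
    rw [Nat.mul_div_cancel _ (show 0 < p by omega)]
  rw [sp_rec hp (x * p), Nat.mul_mod_left, h, Nat.zero_add]

lemma sp_sum_le {p : ℕ} (hp : 1 < p) (s : Finset ℕ) (f : ℕ → ℕ) :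
    sp p (∑ d ∈ s, f d) ≤ ∑ d ∈ s, sp p (f d) := by
  classical
  induction s using Finset.induction with
  | empty => simp [sp_zero]
  | @insert a s' hx ih =>
    rw [Finset.sum_insert hx, Finset.sum_insert hx]
    exact le_trans (sp_add_le hp _ _) (by omega)

lemma sp_nsmul_le {p : ℕ} (hp : 1 < p) (c b : ℕ) : sp p (c * b) ≤ c * sp p b := by
  induction c with
  | zero => simp [sp_zero]
  | succ c ih =>
    have h : (c + 1) * b = c * b + b := by ring
    rw [h]
    calc sp p (c * b + b) ≤ sp p (c * b) + sp p b := sp_add_le hp _ _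
    _ ≤ c * sp p b + sp p b := by omega
    _ = (c + 1) * sp p b := by ring

lemma sp_mul_le {p : ℕ} (hp : 1 < p) : ∀ a b : ℕ, sp p (a * b) ≤ sp p a * sp p b := by
  have key : ∀ N a b, a ≤ N → sp p (a * b) ≤ sp p a * sp p b := by
    intro N
    induction N with
    | zero => intro a b h
              have : a = 0 := by omega
              simp [this, sp_zero]
    | succ N ih =>
      intro a b h
      rcases Nat.eq_zero_or_pos a with hz | hpos
      · simp [hz, sp_zero]
      have hp0 : 0 < p := by omega
      have hsplit : a * b = (a / p * b) * p + (a % p) * b := by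
        have h8 := Nat.div_add_mod a p
        nlinarith [Nat.div_add_mod a p]
      have h1 : sp p (a * b) ≤ sp p (a / p * b) + sp p (a % p * b) := by
        rw [hsplit]
        calc sp p (a / p * b * p + a % p * b)
            ≤ sp p (a / p * b * p) + sp p (a % p * b) := sp_add_le hp _ _
          _ = sp p (a / p * b) + sp p (a % p * b) := by rw [sp_mul_base hp]
      have h2 : sp p (a / p * b) ≤ sp p (a / p) * sp p b :=
        ih _ _ (by have := Nat.div_lt_self hpos hp; omega)
      have h3 : sp p (a % p * b) ≤ a % p * sp p b := sp_nsmul_le hp _ _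
      have h4 : sp p a = a % p + sp p (a / p) := sp_rec hp a
      nlinarith
  intro a b; exact key a a b le_rfl

lemma sp_pow_sub_one {p : ℕ} (hp : 1 < p) (m : ℕ) : sp p (p ^ m - 1) = m * (p - 1) := by
  induction m with
  | zero => simp [sp_zero]
  | succ m ih =>
    have h2 : 0 < p ^ m := by positivity
    have h3 : p ^ (m+1) = p * p ^ m := by ring
    have h5 : (p - 1) * p ^ m + p ^ m = p ^ (m+1) := by
      have h : (p - 1) * p ^ m + p ^ m = ((p-1)+1) * p ^ m := by ring
      rw [h, Nat.sub_add_cancel (by omega), pow_succ]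
      ring
    have h1 : p ^ (m+1) - 1 = (p - 1) * p ^ m + (p ^ m - 1) := by omega
    have hmain := sp_mul_pow_add hp m (p - 1) (p ^ m - 1) (by omega)
    rw [h1, hmain, sp_lt_base hp (show p - 1 < p by omega), ih]
    ring

lemma sp_le_of_lt_pow {p : ℕ} (hp : 1 < p) {N n : ℕ} (hN : N < p ^ n) : sp p N ≤ n * (p - 1) := by
  induction n generalizing N with
  | zero => simp at hN; simp [hN, sp_zero]
  | succ n ih =>
    rw [sp_rec hp N]
    have h1 : N / p < p ^ n := by
      rw [Nat.div_lt_iff_lt_mul (by omega), ← pow_succ]; exact hN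
    have h2 := ih h1
    have h3 : N % p ≤ p - 1 := by have := Nat.mod_lt N (show 0 < p by omega); omega
    have h5 : (n+1) * (p-1) = n * (p-1) + (p-1) := by ring
    omega

lemma eq_pow_sub_one_of_sp {p : ℕ} (hp : 1 < p) {N n : ℕ} (hN : N < p ^ n)
    (h : sp p N = n * (p - 1)) : N = p ^ n - 1 := by
  induction n generalizing N with
  | zero => simp at hN h ⊢; omega
  | succ n ih =>
    have hp0 : 0 < p := by omega
    have h1 : N / p < p ^ n := by
      rw [Nat.div_lt_iff_lt_mul (by omega), ← pow_succ]; exact hN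
    have h2 := sp_le_of_lt_pow hp h1
    have h3 : N % p ≤ p - 1 := by have := Nat.mod_lt N hp0; omega
    have h4 := sp_rec hp N
    have hexp : (n+1) * (p-1) = n * (p-1) + (p-1) := by ring
    have h5 : sp p (N / p) = n * (p - 1) := by omega
    have h6 : N % p = p - 1 := by omega
    have h7 := ih h1 h5
    have h8 := Nat.div_add_mod N p
    rw [h7] at h8
    have h9 : 0 < p ^ n := by positivity
    have h10 : p * p ^ n = p ^ (n+1) := by ring
    have h11 : p * (p ^ n - 1) = p * p ^ n - p := by rw [Nat.mul_sub, Nat.mul_one]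
    omega

lemma sp_dvd_ge {p : ℕ} (hp : 1 < p) {m : ℕ} (hm : 0 < m) :
    ∀ N, 0 < N → (p ^ m - 1) ∣ N → m * (p - 1) ≤ sp p N := by
  intro N
  induction N using Nat.strong_induction_on with
  | _ N ih =>
    intro hNpos hNdvd
    have hpm : 1 < p ^ m := Nat.one_lt_pow (by omega) hp
    rcases Nat.lt_or_ge N (p ^ m) with hlt | hge
    · have hN1 : N = p ^ m - 1 := by
        rcases hNdvd with ⟨k, hk⟩
        rcases Nat.lt_or_ge k 2 with hk2 | hk2
        · interval_cases k <;> omega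
        · have : (p ^ m - 1) * 2 ≤ (p ^ m - 1) * k := Nat.mul_le_mul_left _ hk2
          omega
      rw [hN1, sp_pow_sub_one hp]
    · obtain ⟨q, r, hN, hrlt, hqpos⟩ :
          ∃ q r, N = q * p ^ m + r ∧ r < p ^ m ∧ 0 < q := by
        refine ⟨N / p ^ m, N % p ^ m, ?_, Nat.mod_lt _ (by omega), Nat.div_pos hge (by omega)⟩
        have hdm := Nat.div_add_mod N (p ^ m)
        have hcomm : p ^ m * (N / p ^ m) = N / p ^ m * p ^ m := Nat.mul_comm _ _
        omega
      have hsp : sp p N = sp p q + sp p r := by rw [hN]; exact sp_mul_pow_add hp m q r hrlt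
      have hmul2 : q * 2 ≤ q * p ^ m := Nat.mul_le_mul_left _ (by omega)
      have hlt2 : q + r < N := by omega
      have hsub : q * (p ^ m - 1) = q * p ^ m - q := by rw [Nat.mul_sub, Nat.mul_one]
      have hdvd2 : (p ^ m - 1) ∣ (q + r) := by
        have heq : q + r = N - q * (p ^ m - 1) := by omega
        rw [heq]
        exact Nat.dvd_sub hNdvd (dvd_mul_left _ q)
      have hIH := ih (q + r) hlt2 (by omega) hdvd2
      have hsub2 := sp_add_le hp q r
      omega

lemma sp_pos_of_pos {p : ℕ} (hp : 1 < p) {N : ℕ} (hN : 0 < N) : 0 < sp p N := by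
  induction N using Nat.strong_induction_on with
  | _ N ih =>
    rw [sp_rec hp N]
    rcases Nat.eq_zero_or_pos (N % p) with h | h
    · have h2 : 0 < N / p := Nat.div_pos (by
        rcases Nat.lt_or_ge N p with h3 | h3
        · have := Nat.mod_eq_of_lt h3; omega
        · exact h3) (by omega)
      have := ih (N / p) (Nat.div_lt_self hN hp) h2
      omega
    · omega

lemma eq_pow_of_sp_eq_one {p : ℕ} (hp : 1 < p) :
    ∀ k, sp p k = 1 → ∃ i, k = p ^ i := by
  intro k
  induction k using Nat.strong_induction_on with
  | _ k ih =>
    intro hk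
    have hk0 : k ≠ 0 := by
      intro h; rw [h, sp_zero] at hk; omega
    rw [sp_rec hp k] at hk
    rcases Nat.eq_zero_or_pos (k % p) with h | h
    · have h1 : sp p (k / p) = 1 := by omega
      have h2 : k / p < k := Nat.div_lt_self (by omega) hp
      obtain ⟨i, hi⟩ := ih _ h2 h1
      refine ⟨i + 1, ?_⟩
      have := Nat.div_add_mod k p
      rw [hi] at this
      rw [← this, h, Nat.add_zero, pow_succ]
      ring
    · have h1 : k % p = 1 := by omega
      have h2 : sp p (k / p) = 0 := by omega
      have h3 : k / p = 0 := by
        by_contra h4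
        have := sp_pos_of_pos hp (Nat.pos_of_ne_zero h4)
        omega
      have := Nat.div_add_mod k p
      rw [h3, Nat.mul_zero] at this
      refine ⟨0, ?_⟩
      have hp0 : p ^ 0 = 1 := pow_zero p
      omega

lemma geom_mul {p n : ℕ} (hp : 1 < p) (hn : 0 < n) (t : ℕ) :
    (p ^ n - 1) * ∑ j ∈ Finset.range t, (p ^ n) ^ j = p ^ (n * t) - 1 := by
  induction t with
  | zero => simp
  | succ t ih =>
    rw [Finset.sum_range_succ, Nat.mul_add, ih]
    have h1 : 0 < p ^ n := by positivity
    have h2 : 0 < p ^ (n * t) := by positivity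
    have h3 : (p ^ n) ^ t = p ^ (n * t) := by rw [← pow_mul]
    have h4 : (p ^ n - 1) * (p ^ n) ^ t + (p ^ n) ^ t = p ^ n * (p ^ n) ^ t := by
      have h : (p ^ n - 1) * (p ^ n) ^ t + (p ^ n) ^ t = ((p ^ n - 1) + 1) * (p ^ n) ^ t := by ring
      rw [h, Nat.sub_add_cancel (by omega)]
    have h5 : p ^ n * (p ^ n) ^ t = p ^ (n * (t+1)) := by
      rw [← pow_succ', ← pow_mul, Nat.mul_add, Nat.mul_one, Nat.add_comm]
    have h6 : 0 < (p ^ n) ^ t := by positivity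
    omega

lemma sp_geom_mul {p n : ℕ} (hp : 1 < p) {k : ℕ} (hk : k < p ^ n) (t : ℕ) :
    sp p ((∑ j ∈ Finset.range t, (p ^ n) ^ j) * k) = t * sp p k := by
  induction t with
  | zero => simp [sp_zero]
  | succ t ih =>
    have h1 : (∑ j ∈ Finset.range (t+1), (p ^ n) ^ j) * k
        = ((∑ j ∈ Finset.range t, (p ^ n) ^ j) * k) * p ^ n + k := by
      rw [geom_sum_succ]
      ring
    rw [h1]
    have h2 : ((∑ j ∈ Finset.range t, (p ^ n) ^ j) * k) * p ^ n
        = ((∑ j ∈ Finset.range t, (p ^ n) ^ j) * k) * p ^ n := rfl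
    rw [show ((∑ j ∈ Finset.range t, (p ^ n) ^ j) * k) * p ^ n + k
        = ((∑ j ∈ Finset.range t, (p ^ n) ^ j) * k) * p ^ n + k from rfl]
    rw [sp_mul_pow_add hp n _ k hk, ih]
    ring

/-- Minimal elements of `E_{D,p}(m)` for `D = {1 ≤ i ≤ p^n − 1 : gcd(i,p)=1}`:
if `U = (u_d) ∈ E_{D,p}(m)` has `∑ s_p(u_d) = m/n` (i.e. density `1/(n(p−1))`), then
`n ∣ m`, `u_d = 0` for `d ≠ p^n − 1`, and `u_{p^n−1} = p^i (p^m − 1)/(p^n − 1)`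
for some `0 ≤ i ≤ n − 1`. -/
theorem stmt_8 (p : ℕ) (hp : p.Prime) (n : ℕ) (hn : 0 < n)
    (D : Finset ℕ) (hD : D = (Finset.Icc 1 (p ^ n - 1)).filter fun i => Nat.gcd i p = 1)
    (m : ℕ) (hm : 0 < m) (u : ℕ → ℕ)
    (hbd : ∀ d ∈ D, u d ≤ p ^ m - 1)
    (hdvd : (p ^ m - 1) ∣ (∑ d ∈ D, u d * d)) (hpos : 0 < ∑ d ∈ D, u d * d)
    (hmin : n * ∑ d ∈ D, sp p (u d) = m) :
    ∃ t : ℕ, 0 < t ∧ m = n * t ∧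
      (∀ d ∈ D, d ≠ p ^ n - 1 → u d = 0) ∧
      ∃ i < n, u (p ^ n - 1) = p ^ i * ((p ^ (n * t) - 1) / (p ^ n - 1)) := by
  have hp1 : 1 < p := hp.one_lt
  have hpn : 1 < p ^ n := Nat.one_lt_pow (by omega) hp1
  have hpm : 1 < p ^ m := Nat.one_lt_pow (by omega) hp1
  -- d₀ = p^n - 1 is in D
  have hd0D : p ^ n - 1 ∈ D := by
    rw [hD, Finset.mem_filter, Finset.mem_Icc]
    refine ⟨⟨by omega, le_rfl⟩, ?_⟩
    have hnd : ¬ p ∣ (p ^ n - 1) := by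
      intro h
      have h2 : p ∣ p ^ n := dvd_pow_self p (by omega)
      have h3 := Nat.dvd_sub h2 h
      have h4 : p ^ n - (p ^ n - 1) = 1 := by omega
      rw [h4] at h3
      exact absurd (Nat.le_of_dvd one_pos h3) (by omega)
    exact (Nat.coprime_comm.mp ((hp.coprime_iff_not_dvd).mpr hnd))
  -- bounds for elements of D
  have hDlt : ∀ d ∈ D, d < p ^ n := by
    intro d hd
    rw [hD, Finset.mem_filter, Finset.mem_Icc] at hd
    omega
  -- the chain of inequalities
  have h1 : m * (p - 1) ≤ sp p (∑ d ∈ D, u d * d) := sp_dvd_ge hp1 hm _ hpos hdvd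
  have h2 : sp p (∑ d ∈ D, u d * d) ≤ ∑ d ∈ D, sp p (u d * d) := sp_sum_le hp1 D _
  have h3 : ∑ d ∈ D, sp p (u d * d) ≤ ∑ d ∈ D, sp p (u d) * sp p d :=
    Finset.sum_le_sum fun d _ => sp_mul_le hp1 (u d) d
  have h4le : ∀ d ∈ D, sp p (u d) * sp p d ≤ sp p (u d) * (n * (p - 1)) := fun d hd =>
    Nat.mul_le_mul_left _ (sp_le_of_lt_pow hp1 (hDlt d hd))
  have h4 : ∑ d ∈ D, sp p (u d) * sp p d ≤ ∑ d ∈ D, sp p (u d) * (n * (p - 1)) :=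
    Finset.sum_le_sum h4le
  have h5 : ∑ d ∈ D, sp p (u d) * (n * (p - 1)) = m * (p - 1) := by
    rw [← Finset.sum_mul]
    have : (∑ d ∈ D, sp p (u d)) * (n * (p - 1)) = (n * ∑ d ∈ D, sp p (u d)) * (p - 1) := by ring
    rw [this, hmin]
  -- equality everywhere
  have heq : ∑ d ∈ D, sp p (u d) * sp p d = ∑ d ∈ D, sp p (u d) * (n * (p - 1)) := by omega
  have hterm : ∀ d ∈ D, sp p (u d) * sp p d = sp p (u d) * (n * (p - 1)) :=
    (Finset.sum_eq_sum_iff_of_le h4le).mp heq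
  -- u d = 0 for d ≠ p^n - 1
  have hzero : ∀ d ∈ D, d ≠ p ^ n - 1 → u d = 0 := by
    intro d hd hne
    by_contra hud
    have hsp : 0 < sp p (u d) := sp_pos_of_pos hp1 (Nat.pos_of_ne_zero hud)
    have := hterm d hd
    have hspd : sp p d = n * (p - 1) := by
      exact Nat.eq_of_mul_eq_mul_left hsp this
    exact hne (eq_pow_sub_one_of_sp hp1 (hDlt d hd) hspd)
  -- reduce sums to the single term d₀
  set u₀ := u (p ^ n - 1) with hu₀
  have hT : ∑ d ∈ D, sp p (u d) = sp p u₀ := by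
    refine Finset.sum_eq_single_of_mem _ hd0D fun b hb hne => ?_
    rw [hzero b hb hne, sp_zero]
  have hS : ∑ d ∈ D, u d * d = u₀ * (p ^ n - 1) := by
    refine Finset.sum_eq_single_of_mem _ hd0D fun b hb hne => ?_
    rw [hzero b hb hne, Nat.zero_mul]
  set t := sp p u₀ with ht
  have hmt : m = n * t := by rw [← hmin, hT]
  have htpos : 0 < t := by
    rcases Nat.eq_zero_or_pos t with h | h
    · rw [h, Nat.mul_zero] at hmt; omega
    · exact h
  have hu₀pos : 0 < u₀ := by
    refine Nat.pos_of_ne_zero fun h => ?_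
    rw [hS, h, Nat.zero_mul] at hpos
    omega
  refine ⟨t, htpos, hmt, hzero, ?_⟩
  -- divisibility analysis
  set v := ∑ j ∈ Finset.range t, (p ^ n) ^ j with hv
  have hgeom : (p ^ n - 1) * v = p ^ m - 1 := by rw [hmt]; exact geom_mul hp1 hn t
  have hvpos : 0 < v := by
    rcases Nat.eq_zero_or_pos v with h | h
    · rw [h, Nat.mul_zero] at hgeom; omega
    · exact h
  have hdvd2 : (p ^ n - 1) * v ∣ (p ^ n - 1) * u₀ := by
    rw [hgeom]
    rw [hS] at hdvd
    rwa [Nat.mul_comm u₀ (p ^ n - 1)] at hdvd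
  have hvdvd : v ∣ u₀ := (mul_dvd_mul_iff_left (show (p ^ n - 1 : ℕ) ≠ 0 by omega)).mp hdvd2
  obtain ⟨k, hk⟩ := hvdvd
  have hkpos : 0 < k := by
    rcases Nat.eq_zero_or_pos k with h | h
    · rw [h, Nat.mul_zero] at hk; omega
    · exact h
  have hkle : k < p ^ n := by
    have hb : u₀ ≤ p ^ m - 1 := hbd _ hd0D
    have h6 : v * k ≤ v * (p ^ n - 1) := by
      rw [← hk]
      calc u₀ ≤ p ^ m - 1 := hb
      _ = v * (p ^ n - 1) := by rw [← hgeom]; ring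
    have := Nat.le_of_mul_le_mul_left h6 hvpos
    omega
  have hspu : t = t * sp p k := by
    conv_lhs => rw [ht, hk]
    exact sp_geom_mul hp1 hkle t
  have hspk : sp p k = 1 := by
    rcases Nat.eq_zero_or_pos (sp p k) with h | h
    · rw [h, Nat.mul_zero] at hspu; omega
    · by_contra hne
      have h2 : 2 ≤ sp p k := by omega
      have h3 : t * 2 ≤ t * sp p k := Nat.mul_le_mul_left _ h2
      omega
  obtain ⟨i, hi⟩ := eq_pow_of_sp_eq_one hp1 k hspk
  have hilt : i < n := by
    have : p ^ i < p ^ n := by rw [← hi]; exact hkle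
    exact (Nat.pow_lt_pow_iff_right hp1).mp this
  refine ⟨i, hilt, ?_⟩
  have hdivv : (p ^ (n * t) - 1) / (p ^ n - 1) = v := by
    rw [← hmt, ← hgeom]
    exact Nat.mul_div_cancel_left v (by omega)
  rw [hdivv, hk, hi]
  ring
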